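/- Let g(z) = c₁ e^{λz} + c₂ e^{-λz} with c₁, c₂, λ, a nonzero, A² = -c₂/c₁, and suppose g'(z) - a = A₁ e^{-λz}(e^{λz} - A)² and g'(z) + a = A₁' e^{-λz}(e^{λz} + A)² for nonzero constants A₁, A₁'. Then g(z) = 0 if and only if g'(z) ∈ {a, -a}. -/

import Mathlib

open Complex

theorem stmt_16 (c₁ c₂ l a A A₁ A₁' : ℂ) (hc₁ : c₁ ≠ 0) (hc₂ : c₂ ≠ 0) (hl : l ≠ 0)
    (ha : a ≠ 0) (hA₁ : A₁ ≠ 0) (hA₁' : A₁' ≠ 0) (hA : A ^ 2 = -c₂ / c₁)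
    (g : ℂ → ℂ)
    (hg : ∀ z, g z = c₁ * Complex.exp (l * z) + c₂ * Complex.exp (-(l * z)))
    (hfac : ∀ z : ℂ, deriv g z - a =
      A₁ * Complex.exp (-(l * z)) * (Complex.exp (l * z) - A) ^ 2)
    (hfac' : ∀ z : ℂ, deriv g z + a =
      A₁' * Complex.exp (-(l * z)) * (Complex.exp (l * z) + A) ^ 2) :
    ∀ z : ℂ, g z = 0 ↔ (deriv g z = a ∨ deriv g z = -a) := by
  have hc2 : c₂ = -c₁ * A ^ 2 := by
    field_simp at hA
    linear_combination hA
  have hAne : A ≠ 0 := by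
    intro h4
    rw [h4] at hc2
    simp at hc2
    exact hc₂ hc2
  intro z
  set w := Complex.exp (l * z) with hwdef
  have hw : w ≠ 0 := Complex.exp_ne_zero _
  have hwinv : Complex.exp (-(l * z)) = w⁻¹ := Complex.exp_neg _
  have hgz : g z = c₁ * w + c₂ * w⁻¹ := by rw [hg z, hwinv]
  have hf : deriv g z - a = A₁ * w⁻¹ * (w - A) ^ 2 := by rw [hfac z, hwinv]
  have hf' : deriv g z + a = A₁' * w⁻¹ * (w + A) ^ 2 := by rw [hfac' z, hwinv]
  constructor
  · intro h
    have hfa : (w - A) * (w + A) = 0 := by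
      have : c₁ * w + c₂ * w⁻¹ = 0 := by rw [← hgz]; exact h
      have h2 : c₁ * ((w - A) * (w + A)) = 0 := by
        field_simp [hc2] at this ⊢
        linear_combination this - hc2
      rcases mul_eq_zero.mp h2 with h3 | h3
      · exact absurd h3 hc₁
      · exact h3
    rcases mul_eq_zero.mp hfa with h3 | h3
    · left
      have : deriv g z - a = 0 := by rw [hf, sub_eq_zero.mpr (sub_eq_zero.mp h3)]; ring
      linear_combination this
    · right
      have hwA : w + A = 0 := h3
      have : deriv g z + a = 0 := by rw [hf', hwA]; ring
      linear_combination this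
  · intro h
    rcases h with h | h
    · have h0 : A₁ * w⁻¹ * (w - A) ^ 2 = 0 := by rw [← hf, h]; ring
      have hwa : w = A := by
        rcases mul_eq_zero.mp h0 with h1 | h1
        · rcases mul_eq_zero.mp h1 with h2 | h2
          · exact absurd h2 hA₁
          · exact absurd (inv_eq_zero.mp h2) hw
        · have := pow_eq_zero_iff (n := 2) (by norm_num) |>.mp h1
          linear_combination this
      rw [hgz, hwa, hc2]
      field_simp [hAne]
      ring
    · have h0 : A₁' * w⁻¹ * (w + A) ^ 2 = 0 := by rw [← hf', h]; ring
      have hwa : w = -A := by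
        rcases mul_eq_zero.mp h0 with h1 | h1
        · rcases mul_eq_zero.mp h1 with h2 | h2
          · exact absurd h2 hA₁'
          · exact absurd (inv_eq_zero.mp h2) hw
        · have := pow_eq_zero_iff (n := 2) (by norm_num) |>.mp h1
          linear_combination this
      rw [hgz, hwa, hc2]
      field_simp [hAne]
      ring
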